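/- arXiv:1812.00885 — 4 statements merged into one kernel-verified Lean document; each statement's English description precedes it below -/
import Mathlib

section
/- Let G : ℝⁿ → ℝⁿ be a γ-contraction in the ℓ∞ norm (0 < γ < 1) with fixed point x*. Consider an asynchronous coordinate-update sequence x(t) where at each time t a subset of coordinates is updated via x_i(t+1) = G_i(x̂(t)) with x̂_j(t) = x_j(τ_j(t)), and other coordinates are unchanged. Assume partial asynchronism: (a) each coordinate i is updated at least once in every window {t, …, t+B₁−1}; (b) delays satisfy t − B₂ < τ_j(t) ≤ t. Then for all t ≥ B₁, ‖x(t) − x*‖∞ ≤ ‖x(0) − x*‖∞ · ρ^{t − 2B₁}, where ρ = γ^{1/(B₁+B₂−1)}. -/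
/-- Convergence rate of asynchronous coordinate updates for an
ℓ∞ γ-contraction under partial asynchronism. -/
theorem async_linear_convergence
    (n : ℕ) (hn : 0 < n)
    (G : (Fin n → ℝ) → (Fin n → ℝ)) (γ : ℝ) (hγ0 : 0 < γ) (hγ1 : γ < 1)
    (hcontr : ∀ u v : Fin n → ℝ, ‖G u - G v‖ ≤ γ * ‖u - v‖)
    (xstar : Fin n → ℝ) (hfix : G xstar = xstar)
    (x : ℕ → Fin n → ℝ)                -- iterate sequence
    (τ : Fin n → ℕ → ℕ)                -- stale indices
    (𝒯 : Fin n → Set ℕ)                -- update times of each coordinate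
    (hupd : ∀ t : ℕ, ∀ i : Fin n,
      (t ∈ 𝒯 i → x (t + 1) i = G (fun j => x (τ j t) j) i) ∧
      (t ∉ 𝒯 i → x (t + 1) i = x t i))
    (B₁ B₂ : ℕ) (hB₁ : 0 < B₁) (hB₂ : 0 < B₂)
    (ha : ∀ i : Fin n, ∀ t : ℕ, ∃ s, t ≤ s ∧ s ≤ t + B₁ - 1 ∧ s ∈ 𝒯 i)
    (hb : ∀ j : Fin n, ∀ t : ℕ, t < τ j t + B₂ ∧ τ j t ≤ t) :
    ∀ t : ℕ, B₁ ≤ t →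
      ‖x t - xstar‖ ≤
        ‖x 0 - xstar‖ *
          (γ ^ ((1 : ℝ) / (B₁ + B₂ - 1))) ^ ((t : ℝ) - 2 * B₁) := by
  set m : ℕ := B₁ + B₂ - 1 with hm_def
  have hm : 1 ≤ m := by omega
  set D : ℝ := ‖x 0 - xstar‖ with hD_def
  have hD0 : 0 ≤ D := norm_nonneg _
  -- componentwise contraction helper
  have hcomp : ∀ (u : Fin n → ℝ) (c : ℝ), 0 ≤ c →
      (∀ j, ‖u j - xstar j‖ ≤ c) → ∀ i, ‖G u i - xstar i‖ ≤ γ * c := by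
    intro u c hc hj i
    have h1 : ‖u - xstar‖ ≤ c := by
      rw [pi_norm_le_iff_of_nonneg hc]
      intro j; simpa [Pi.sub_apply] using hj j
    have h2 : ‖G u i - xstar i‖ ≤ ‖G u - G xstar‖ := by
      have := norm_le_pi_norm (G u - G xstar) i
      simpa [Pi.sub_apply, hfix] using this
    calc ‖G u i - xstar i‖ ≤ ‖G u - G xstar‖ := h2
      _ ≤ γ * ‖u - xstar‖ := hcontr u xstar
      _ ≤ γ * c := by nlinarith
  -- Step 0: all iterates stay in the initial ball (componentwise)
  have base : ∀ s : ℕ, ∀ i, ‖x s i - xstar i‖ ≤ D := by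
    have aux : ∀ s : ℕ, ∀ r ≤ s, ∀ i, ‖x r i - xstar i‖ ≤ D := by
      intro s
      induction s with
      | zero =>
        intro r hr i
        interval_cases r
        have := norm_le_pi_norm (x 0 - xstar) i
        simpa [Pi.sub_apply] using this
      | succ s ih =>
        intro r hr i
        rcases Nat.lt_or_ge r (s + 1) with h | h
        · exact ih r (by omega) i
        · have hr' : r = s + 1 := by omega
          subst hr'
          by_cases hT : s ∈ 𝒯 i
          · have hx := (hupd s i).1 hT
            rw [hx]
            have hγc : ‖G (fun j => x (τ j s) j) i - xstar i‖ ≤ γ * D := by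
              apply hcomp _ D hD0
              intro j
              exact ih (τ j s) (hb j s).2 j
            nlinarith
          · have hx := (hupd s i).2 hT
            rw [hx]
            exact ih s (le_refl s) i
    intro s i; exact aux s s (le_refl s) i
  -- once coordinate i was updated at a time after which all stale indices
  -- are ≥ T, its value contracts by γ relative to the bound valid from T on
  have claimC : ∀ (T : ℕ) (c : ℝ), 0 ≤ c →
      (∀ r, T ≤ r → ∀ j, ‖x r j - xstar j‖ ≤ c) →
      ∀ s i, (∃ u, u < s ∧ u ∈ 𝒯 i ∧ ∀ s', u ≤ s' → ∀ j, T ≤ τ j s') →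
      ‖x s i - xstar i‖ ≤ γ * c := by
    intro T c hc hbd s
    induction s with
    | zero => intro i ⟨u, hu, _, _⟩; omega
    | succ s ihs =>
      intro i ⟨u, hu1, hu2, hu3⟩
      by_cases hT : s ∈ 𝒯 i
      · have hx := (hupd s i).1 hT
        rw [hx]
        apply hcomp _ c hc
        intro j
        exact hbd _ (hu3 s (by omega) j) j
      · have hx := (hupd s i).2 hT
        rw [hx]
        apply ihs i
        have hne : u ≠ s := fun h => hT (h ▸ hu2)
        exact ⟨u, by omega, hu2, hu3⟩
  -- geometric decay: one factor of γ per block of length m after time B₁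
  have key : ∀ k : ℕ, ∀ s : ℕ, B₁ + k * m ≤ s → ∀ i,
      ‖x s i - xstar i‖ ≤ γ ^ (k + 1) * D := by
    intro k
    induction k with
    | zero =>
      intro s hs i
      obtain ⟨u, hu1, hu2, hu3⟩ := ha i (s - B₁)
      have h := claimC 0 D hD0 (fun r _ j => base r j) s i
        ⟨u, by omega, hu3, fun s' _ j => Nat.zero_le _⟩
      simpa using h
    | succ k ih =>
      intro s hs i
      have hmm : (k + 1) * m = k * m + m := by ring
      obtain ⟨u, hu1, hu2, hu3⟩ := ha i (s - B₁)
      have h := claimC (B₁ + k * m) (γ ^ (k + 1) * D) (by positivity)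
        (fun r hr j => ih r hr j) s i
        ⟨u, by omega, hu3, by
          intro s' hs' j
          have hb1 := (hb j s').1
          omega⟩
      calc ‖x s i - xstar i‖ ≤ γ * (γ ^ (k + 1) * D) := h
        _ = γ ^ (k + 1 + 1) * D := by ring
  -- Final: combine with the choice k = (t - B₁) / m
  intro t ht
  obtain ⟨k, r, hdm, hmod⟩ : ∃ k r, k * m + r = t - B₁ ∧ r < m :=
    ⟨(t - B₁) / m, (t - B₁) % m, by rw [mul_comm]; exact Nat.div_add_mod _ _,
      Nat.mod_lt _ (by omega)⟩
  have hkm1 : B₁ + k * m ≤ t := by omega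
  have hkm2 : t + 1 ≤ k * m + m + B₁ := by omega
  have hbound : ‖x t - xstar‖ ≤ γ ^ (k + 1) * D := by
    rw [pi_norm_le_iff_of_nonneg (by positivity)]
    intro i
    simpa [Pi.sub_apply] using key k t hkm1 i
  refine hbound.trans ?_
  rw [mul_comm]
  apply mul_le_mul_of_nonneg_left _ hD0
  have hmr : ((B₁ : ℝ) + B₂ - 1) = (m : ℝ) := by
    have : (m : ℝ) = ((B₁ + B₂ : ℕ) : ℝ) - 1 := by
      rw [hm_def]
      push_cast [Nat.cast_sub (by omega : 1 ≤ B₁ + B₂)]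
      ring
    push_cast at this
    linarith
  have hmr0 : (0 : ℝ) < (m : ℝ) := by exact_mod_cast hm
  have hexp : (1 : ℝ) / (m : ℝ) * ((t : ℝ) - 2 * B₁) ≤ ((k + 1 : ℕ) : ℝ) := by
    rw [div_mul_eq_mul_div, one_mul, div_le_iff₀ hmr0]
    have h1 : ((t : ℝ) + 1) ≤ (k : ℝ) * m + m + B₁ := by exact_mod_cast hkm2
    have h2 : (1 : ℝ) ≤ (B₁ : ℝ) := by exact_mod_cast hB₁
    push_cast
    linarith
  rw [hmr]
  calc γ ^ (k + 1) = γ ^ ((k + 1 : ℕ) : ℝ) := by rw [Real.rpow_natCast]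
    _ ≤ γ ^ ((1 : ℝ) / (m : ℝ) * ((t : ℝ) - 2 * B₁)) :=
        Real.rpow_le_rpow_of_exponent_ge hγ0 hγ1.le hexp
    _ = (γ ^ ((1 : ℝ) / (m : ℝ))) ^ ((t : ℝ) - 2 * B₁) :=
        Real.rpow_mul hγ0.le _ _
end

section
/- Under the same asynchronous coordinate-update setting with partial asynchronism, the iterates satisfy the non-expansiveness bound ‖x(t) − x*‖∞ ≤ ‖x(0) − x*‖∞ for all t ≥ 0. -/
/-- Non-expansiveness of asynchronous coordinate updates for an
ℓ∞ γ-contraction: the iterates never move farther from the fixed point than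
the initial point. -/
theorem async_nonexpansive
    (n : ℕ) (hn : 0 < n)
    (G : (Fin n → ℝ) → (Fin n → ℝ)) (γ : ℝ) (hγ0 : 0 < γ) (hγ1 : γ < 1)
    (hcontr : ∀ u v : Fin n → ℝ, ‖G u - G v‖ ≤ γ * ‖u - v‖)
    (xstar : Fin n → ℝ) (hfix : G xstar = xstar)
    (x : ℕ → Fin n → ℝ)
    (τ : Fin n → ℕ → ℕ)
    (𝒯 : Fin n → Set ℕ)
    (hupd : ∀ t : ℕ, ∀ i : Fin n,
      (t ∈ 𝒯 i → x (t + 1) i = G (fun j => x (τ j t) j) i) ∧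
      (t ∉ 𝒯 i → x (t + 1) i = x t i))
    (hτ : ∀ j : Fin n, ∀ t : ℕ, τ j t ≤ t) :
    ∀ t : ℕ, ‖x t - xstar‖ ≤ ‖x 0 - xstar‖ := by
  intro t
  induction t using Nat.strong_induction_on with
  | _ t ih =>
    match t with
    | 0 => exact le_refl _
    | Nat.succ s =>
      have hM0 : (0:ℝ) ≤ ‖x 0 - xstar‖ := norm_nonneg _
      rw [pi_norm_le_iff_of_nonneg hM0]
      intro i
      rcases Classical.em (s ∈ 𝒯 i) with h | h
      · have hx := (hupd s i).1 h
        have hy : ‖(fun j => x (τ j s) j) - xstar‖ ≤ ‖x 0 - xstar‖ := by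
          rw [pi_norm_le_iff_of_nonneg hM0]
          intro j
          calc ‖((fun j => x (τ j s) j) - xstar) j‖ = ‖(x (τ j s) - xstar) j‖ := rfl
            _ ≤ ‖x (τ j s) - xstar‖ := norm_le_pi_norm _ j
            _ ≤ ‖x 0 - xstar‖ := ih _ (Nat.lt_succ_of_le (hτ j s))
        calc ‖(x (s+1) - xstar) i‖ = ‖(G (fun j => x (τ j s) j) - G xstar) i‖ := by
              simp [Pi.sub_apply, hx, hfix]
          _ ≤ ‖G (fun j => x (τ j s) j) - G xstar‖ := norm_le_pi_norm _ i
          _ ≤ γ * ‖(fun j => x (τ j s) j) - xstar‖ := by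
              simpa [hfix] using hcontr (fun j => x (τ j s) j) xstar
          _ ≤ 1 * ‖x 0 - xstar‖ := by
              apply mul_le_mul hγ1.le hy (norm_nonneg _) zero_le_one
          _ = ‖x 0 - xstar‖ := one_mul _
      · have hx := (hupd s i).2 h
        calc ‖(x (s+1) - xstar) i‖ = ‖(x s - xstar) i‖ := by simp [Pi.sub_apply, hx]
          _ ≤ ‖x s - xstar‖ := norm_le_pi_norm _ i
          _ ≤ ‖x 0 - xstar‖ := ih s (Nat.lt_succ_self s)
end

section
/- Let 0 < γ < 1. For the sorted update times (t_k^i) of coordinate i (with t_0^i the first element of 𝒯^i), under partial asynchronism with parameters B₁, B₂ and a γ-contraction G with fixed point x*, for each t ≥ B₁ and each i, if t ∈ (t_k^i, t_{k+1}^i] for some k, then |x_i(t) − x_i*| ≤ ‖x(0) − x*‖∞ · ρ^{t_k^i − B₁}, where ρ = γ^{1/(B₁+B₂−1)}. -/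
/-- Staircase-decreasing error bound for asynchronous coordinate
updates: between consecutive update times of coordinate `i`, the coordinatewise
error is bounded using the last update time. -/
theorem async_staircase_decreasing
    (n : ℕ) (hn : 0 < n)
    (G : (Fin n → ℝ) → (Fin n → ℝ)) (γ : ℝ) (hγ0 : 0 < γ) (hγ1 : γ < 1)
    (hcontr : ∀ u v : Fin n → ℝ, ‖G u - G v‖ ≤ γ * ‖u - v‖)
    (xstar : Fin n → ℝ) (hfix : G xstar = xstar)
    (x : ℕ → Fin n → ℝ)
    (τ : Fin n → ℕ → ℕ)
    (𝒯 : Fin n → Set ℕ)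
    (hupd : ∀ t : ℕ, ∀ i : Fin n,
      (t ∈ 𝒯 i → x (t + 1) i = G (fun j => x (τ j t) j) i) ∧
      (t ∉ 𝒯 i → x (t + 1) i = x t i))
    (B₁ B₂ : ℕ) (hB₁ : 0 < B₁) (hB₂ : 0 < B₂)
    (ha : ∀ i : Fin n, ∀ t : ℕ, ∃ s, t ≤ s ∧ s ≤ t + B₁ - 1 ∧ s ∈ 𝒯 i)
    (hb : ∀ j : Fin n, ∀ t : ℕ, t < τ j t + B₂ ∧ τ j t ≤ t)
    (tk : Fin n → ℕ → ℕ)               -- sorted enumeration of 𝒯 i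
    (htk_mono : ∀ i, StrictMono (tk i))
    (htk_mem : ∀ i k, tk i k ∈ 𝒯 i)
    (htk_surj : ∀ i, ∀ s ∈ 𝒯 i, ∃ k, tk i k = s) :
    ∀ t : ℕ, B₁ ≤ t → ∀ i : Fin n, ∀ k : ℕ,
      tk i k < t → t ≤ tk i (k + 1) →
      |x t i - xstar i| ≤
        ‖x 0 - xstar‖ *
          (γ ^ ((1 : ℝ) / (B₁ + B₂ - 1))) ^ ((tk i k : ℝ) - B₁) := by
  classical
  set M : ℝ := ‖x 0 - xstar‖ with hMdef
  have hM0 : 0 ≤ M := norm_nonneg _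
  set c : ℝ := (B₁ : ℝ) + (B₂ : ℝ) - 1 with hcdef
  have hB₁' : (1 : ℝ) ≤ (B₁ : ℝ) := by exact_mod_cast hB₁
  have hB₂' : (1 : ℝ) ≤ (B₂ : ℝ) := by exact_mod_cast hB₂
  have hc1 : (1 : ℝ) ≤ c := by rw [hcdef]; linarith
  have hc0 : (0 : ℝ) < c := lt_of_lt_of_le one_pos hc1
  set ρ : ℝ := γ ^ ((1 : ℝ) / c) with hρdef
  have hρpos : 0 < ρ := Real.rpow_pos_of_pos hγ0 _
  have hρle1 : ρ ≤ 1 :=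
    Real.rpow_le_one hγ0.le hγ1.le (by positivity)
  have hγρ : ρ ^ c = γ := by
    rw [hρdef, ← Real.rpow_mul hγ0.le, one_div_mul_cancel hc0.ne', Real.rpow_one]
  have hmono : ∀ a b : ℝ, a ≤ b → ρ ^ b ≤ ρ ^ a := fun a b h =>
    Real.rpow_le_rpow_of_exponent_ge hρpos hρle1 h
  have hone : ∀ e : ℝ, e ≤ 0 → (1 : ℝ) ≤ ρ ^ e := by
    intro e he
    have h := hmono e 0 he
    rwa [Real.rpow_zero] at h
  -- key induction
  have key : ∀ t : ℕ, ∀ i : Fin n,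
      |x t i - xstar i| ≤ M ∧
      (∀ ℓ : ℕ, ℓ ∈ 𝒯 i → ℓ < t →
        |x t i - xstar i| ≤ M * ρ ^ ((ℓ : ℝ) - (B₁ : ℝ))) := by
    intro t
    induction t using Nat.strong_induction_on with
    | _ t IH =>
      rcases t with _ | s
      · intro i
        constructor
        · have h := norm_le_pi_norm (x 0 - xstar) i
          simpa [Real.norm_eq_abs] using h
        · intro ℓ _ hℓ; exact absurd hℓ (Nat.not_lt_zero ℓ)
      · intro i
        -- contraction step bound
        have hGb : s ∈ 𝒯 i → ∀ C : ℝ, 0 ≤ C →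
            (∀ j, |x (τ j s) j - xstar j| ≤ C) →
            |x (s + 1) i - xstar i| ≤ γ * C := by
          intro hs C hC hall
          have hx : x (s + 1) i = G (fun j => x (τ j s) j) i := (hupd s i).1 hs
          have h1 : |x (s + 1) i - xstar i| ≤
              ‖G (fun j => x (τ j s) j) - G xstar‖ := by
            have h := norm_le_pi_norm (G (fun j => x (τ j s) j) - G xstar) i
            simpa [hx, hfix, Real.norm_eq_abs] using h
          have h2 : ‖(fun j => x (τ j s) j) - xstar‖ ≤ C := by
            rw [pi_norm_le_iff_of_nonneg hC]
            intro j
            simpa [Real.norm_eq_abs] using hall j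
          calc |x (s + 1) i - xstar i| ≤ ‖G (fun j => x (τ j s) j) - G xstar‖ := h1
            _ ≤ γ * ‖(fun j => x (τ j s) j) - xstar‖ := hcontr _ _
            _ ≤ γ * C := mul_le_mul_of_nonneg_left h2 hγ0.le
        have hbase : |x (s + 1) i - xstar i| ≤ M := by
          by_cases hs : s ∈ 𝒯 i
          · have h := hGb hs M hM0
              (fun j => (IH (τ j s) (Nat.lt_succ_of_le (hb j s).2) j).1)
            nlinarith
          · rw [(hupd s i).2 hs]
            exact (IH s (Nat.lt_succ_self s) i).1
        have hupdbd : s ∈ 𝒯 i →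
            |x (s + 1) i - xstar i| ≤ M * ρ ^ ((s : ℝ) - (B₁ : ℝ)) := by
          intro hs
          have hjbd : ∀ j, |x (τ j s) j - xstar j| ≤
              M * ρ ^ ((s : ℝ) - (B₁ : ℝ) - c) := by
            intro j
            have hu1 : τ j s ≤ s := (hb j s).2
            have hu2 : s < τ j s + B₂ := (hb j s).1
            by_cases hcase : B₁ ≤ τ j s
            · obtain ⟨w, hw1, hw2, hw3⟩ := ha j (τ j s - B₁)
              have hwlt : w < τ j s := by omega
              have hbd := (IH (τ j s) (Nat.lt_succ_of_le hu1) j).2 w hw3 hwlt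
              have hsw : s + 1 ≤ w + B₁ + B₂ := by omega
              have hsw' : (s : ℝ) + 1 ≤ (w : ℝ) + B₁ + B₂ := by exact_mod_cast hsw
              have hexp : (s : ℝ) - B₁ - c ≤ (w : ℝ) - B₁ := by
                rw [hcdef]; linarith
              calc |x (τ j s) j - xstar j| ≤ M * ρ ^ ((w : ℝ) - (B₁ : ℝ)) := hbd
                _ ≤ M * ρ ^ ((s : ℝ) - (B₁ : ℝ) - c) :=
                    mul_le_mul_of_nonneg_left (hmono _ _ hexp) hM0
            · have hbd := (IH (τ j s) (Nat.lt_succ_of_le hu1) j).1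
              have hsn : s + 2 ≤ B₁ + B₂ := by omega
              have hsn' : (s : ℝ) + 2 ≤ (B₁ : ℝ) + B₂ := by exact_mod_cast hsn
              have hexp : (s : ℝ) - B₁ - c ≤ 0 := by rw [hcdef]; linarith
              have h1 := hone _ hexp
              nlinarith
          have h := hGb hs _ (by positivity) hjbd
          have heq : ρ ^ c * ρ ^ ((s : ℝ) - (B₁ : ℝ) - c) =
              ρ ^ ((s : ℝ) - (B₁ : ℝ)) := by
            rw [← Real.rpow_add hρpos]
            ring_nf
          calc |x (s + 1) i - xstar i| ≤ γ * (M * ρ ^ ((s : ℝ) - (B₁ : ℝ) - c)) := h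
            _ = M * (ρ ^ c * ρ ^ ((s : ℝ) - (B₁ : ℝ) - c)) := by rw [hγρ]; ring
            _ = M * ρ ^ ((s : ℝ) - (B₁ : ℝ)) := by rw [heq]
        refine ⟨hbase, ?_⟩
        intro ℓ hℓmem hℓlt
        by_cases hs : s ∈ 𝒯 i
        · have h := hupdbd hs
          have hℓs : (ℓ : ℝ) ≤ (s : ℝ) := by
            exact_mod_cast Nat.lt_succ_iff.mp hℓlt
          have hm : ρ ^ ((s : ℝ) - (B₁ : ℝ)) ≤ ρ ^ ((ℓ : ℝ) - (B₁ : ℝ)) :=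
            hmono _ _ (by linarith)
          calc |x (s + 1) i - xstar i| ≤ M * ρ ^ ((s : ℝ) - (B₁ : ℝ)) := h
            _ ≤ M * ρ ^ ((ℓ : ℝ) - (B₁ : ℝ)) := mul_le_mul_of_nonneg_left hm hM0
        · have hℓs : ℓ < s := by
            rcases Nat.lt_succ_iff_lt_or_eq.mp hℓlt with h | h
            · exact h
            · exact absurd (h ▸ hℓmem) hs
          rw [(hupd s i).2 hs]
          exact (IH s (Nat.lt_succ_self s) i).2 ℓ hℓmem hℓs
  intro t _ i k hk1 _
  exact (key t i).2 (tk i k) (htk_mem i k) hk1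
end

section
/- Suppose for each t, |r(t) + γ·S(t) − r̄(t) − γ·P(t)| ≤ (1−γ)ε/4 where r̄(t), P(t) are the true expectations. If two sequences Q(t) and Q^E(t) in ℝ^{S×A} share the same initial point, the same coordinate selections and delays, where Q updates via Q_{i,a}(t+1) = r(t) + γS(Q̂(t)) − (1−γ)ε/4 and Q^E updates via the exact expectation Q^E_{i,a}(t+1) = r̄_i^a + γ Σ_j p_{ij}^a max_{a'} Q̂^E_{j,a'}(t) (with P(t) = Σ_j p_{i_t j}^{a_t} max_{a'} Q̂_{j,a'}(t)), then ‖Q(t) − Q^E(t)‖∞ ≤ ε/2 for all 1 ≤ t ≤ L. -/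
private lemma aux_sup_diff {A : Type*} [Fintype A] [Nonempty A]
    (f g : A → ℝ) (c : ℝ) (hc : ∀ a, |f a - g a| ≤ c) :
    |(⨆ a, f a) - (⨆ a, g a)| ≤ c := by
  have hbf : BddAbove (Set.range f) := (Set.finite_range f).bddAbove
  have hbg : BddAbove (Set.range g) := (Set.finite_range g).bddAbove
  rw [abs_sub_le_iff]
  constructor
  · have h1 : (⨆ a, f a) ≤ (⨆ a, g a) + c := by
      apply ciSup_le
      intro a
      have := le_ciSup hbg a
      have := (abs_le.1 (hc a)).2
      linarith
    linarith
  · have h1 : (⨆ a, g a) ≤ (⨆ a, f a) + c := by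
      apply ciSup_le
      intro a
      have := le_ciSup hbf a
      have := (abs_le.1 (hc a)).1
      linarith
    linarith

/-- Error accumulation control between the sampled asynchronous
Q-iteration and its exact-expectation counterpart. -/
theorem asyncqvi_error_control
    (S A : Type*) [Fintype S] [Fintype A] [Nonempty S] [Nonempty A]
    (γ : ℝ) (hγ0 : 0 < γ) (hγ1 : γ < 1)
    (ε : ℝ) (hε : 0 < ε)
    (L : ℕ)
    (p : S → A → S → ℝ)
    (hp_nonneg : ∀ i a j, 0 ≤ p i a j)
    (hp_sum : ∀ i a, ∑ j, p i a j = 1)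
    (rbar : S → A → ℝ)
    (idx : ℕ → S × A)                 -- coordinate selected at time t
    (τ : S × A → ℕ → ℕ)               -- delayed indices
    (hτ : ∀ c t, τ c t ≤ t)
    (r : ℕ → ℝ) (Smp : ℕ → ℝ)         -- sampled reward / value averages
    (Q QE : ℕ → S × A → ℝ)
    (hinit : Q 0 = QE 0)
    -- updates of the sampled sequence
    (hQ_upd : ∀ t, Q (t + 1) (idx t) = r t + γ * Smp t - (1 - γ) * ε / 4)
    (hQ_keep : ∀ t c, c ≠ idx t → Q (t + 1) c = Q t c)
    -- updates of the exact-expectation sequence (same coordinates, same delays)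
    (hQE_upd : ∀ t, QE (t + 1) (idx t) =
      rbar (idx t).1 (idx t).2 +
        γ * ∑ j, p (idx t).1 (idx t).2 j * ⨆ a', QE (τ (j, a') t) (j, a'))
    (hQE_keep : ∀ t c, c ≠ idx t → QE (t + 1) c = QE t c)
    -- one-step sampling error bound, with P(t) the delayed expected max
    (herr : ∀ t, t ≤ L - 1 →
      |r t + γ * Smp t - rbar (idx t).1 (idx t).2 -
        γ * ∑ j, p (idx t).1 (idx t).2 j * ⨆ a', Q (τ (j, a') t) (j, a')| ≤
        (1 - γ) * ε / 4) :
    ∀ t, 1 ≤ t → t ≤ L → ‖Q t - QE t‖ ≤ ε / 2 := by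
  have hε2 : (0:ℝ) ≤ ε / 2 := by linarith
  have main : ∀ t, t ≤ L → ‖Q t - QE t‖ ≤ ε / 2 := by
    intro t
    induction t using Nat.strong_induction_on with
    | _ t ih =>
      intro htL
      match t, ih, htL with
      | 0, ih, htL =>
        rw [hinit, sub_self, norm_zero]
        exact hε2
      | (n+1), ih, htL =>
        have hn1 : n ≤ L - 1 := by omega
        rw [pi_norm_le_iff_of_nonneg hε2]
        intro c
        rw [Pi.sub_apply, Real.norm_eq_abs]
        by_cases hc : c = idx n
        · subst hc
          set i := (idx n).1
          set a := (idx n).2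
          set fQ : S → ℝ := fun j => ⨆ a', Q (τ (j, a') n) (j, a') with hfQ
          set fE : S → ℝ := fun j => ⨆ a', QE (τ (j, a') n) (j, a') with hfE
          have hd : ∀ j, |fQ j - fE j| ≤ ε / 2 := by
            intro j
            apply aux_sup_diff
            intro a'
            have hs : τ (j, a') n ≤ n := hτ _ _
            have hih := ih (τ (j, a') n) (by omega) (by omega)
            have hle := norm_le_pi_norm (Q (τ (j, a') n) - QE (τ (j, a') n)) (j, a')
            rw [Pi.sub_apply, Real.norm_eq_abs] at hle
            linarith
          have hsum : |∑ j, p i a j * (fQ j - fE j)| ≤ ε / 2 := by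
            calc |∑ j, p i a j * (fQ j - fE j)|
                ≤ ∑ j, |p i a j * (fQ j - fE j)| := Finset.abs_sum_le_sum_abs _ _
              _ = ∑ j, p i a j * |fQ j - fE j| := by
                  refine Finset.sum_congr rfl fun j _ => ?_
                  rw [abs_mul, abs_of_nonneg (hp_nonneg i a j)]
              _ ≤ ∑ j, p i a j * (ε / 2) := by
                  refine Finset.sum_le_sum fun j _ => ?_
                  exact mul_le_mul_of_nonneg_left (hd j) (hp_nonneg i a j)
              _ = ε / 2 := by rw [← Finset.sum_mul, hp_sum, one_mul]
          have hδ := herr n hn1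
          have heq : Q (n+1) (idx n) - QE (n+1) (idx n) =
              (r n + γ * Smp n - rbar i a - γ * ∑ j, p i a j * fQ j)
              - (1 - γ) * ε / 4 + γ * ∑ j, p i a j * (fQ j - fE j) := by
            rw [hQ_upd n, hQE_upd n]
            have hsub : ∑ j, p i a j * (fQ j - fE j)
                = (∑ j, p i a j * fQ j) - ∑ j, p i a j * fE j := by
              rw [← Finset.sum_sub_distrib]
              exact Finset.sum_congr rfl fun j _ => by ring
            rw [hsub]
            ring
          rw [heq]
          have h1 : |(r n + γ * Smp n - rbar i a - γ * ∑ j, p i a j * fQ j)| ≤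
              (1 - γ) * ε / 4 := hδ
          have h2 : |γ * ∑ j, p i a j * (fQ j - fE j)| ≤ γ * (ε / 2) := by
            rw [abs_mul, abs_of_nonneg hγ0.le]
            exact mul_le_mul_of_nonneg_left hsum hγ0.le
          have h3 : |(1 - γ) * ε / 4| = (1 - γ) * ε / 4 := by
            rw [abs_of_nonneg]; nlinarith
          calc |(r n + γ * Smp n - rbar i a - γ * ∑ j, p i a j * fQ j)
              - (1 - γ) * ε / 4 + γ * ∑ j, p i a j * (fQ j - fE j)|
              ≤ |(r n + γ * Smp n - rbar i a - γ * ∑ j, p i a j * fQ j)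
                - (1 - γ) * ε / 4| + |γ * ∑ j, p i a j * (fQ j - fE j)| :=
                abs_add_le _ _
            _ ≤ (|(r n + γ * Smp n - rbar i a - γ * ∑ j, p i a j * fQ j)|
                + |(1 - γ) * ε / 4|) + γ * (ε / 2) :=
                add_le_add (abs_sub _ _) h2
            _ ≤ ε / 2 := by rw [h3]; nlinarith [h1]
        · rw [hQ_keep n c hc, hQE_keep n c hc]
          have hih := ih n (by omega) (by omega)
          have hle := norm_le_pi_norm (Q n - QE n) c
          rw [Pi.sub_apply, Real.norm_eq_abs] at hle
          linarith
  intro t _ hL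
  exact main t hL
end
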